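/- arXiv:1307.5329 — 2 statements merged into one kernel-verified Lean document; each statement's English description precedes it below -/
import Mathlib

section
/- Let φ be the Fibonacci morphism (φ(0)=01, φ(1)=0), f_n = φ^{n-1}(0), and define p_n for n ≥ 2 by f_n = p_n · a · b where ab ∈ {01, 10} (i.e., p_n is f_n with its last two letters removed). Then for all n ≥ 2, φ(p_n)·0 = p_{n+1}. -/
/-- The Fibonacci morphism on letters: φ(0)=01, φ(1)=0 (0 = `false`, 1 = `true`). -/
def phi : Bool → List Bool
  | false => [false, true]
  | true  => [false]

/-- The Fibonacci morphism extended to words. -/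
def phiW (w : List Bool) : List Bool := w.flatMap phi

/-- The finite Fibonacci words: `fibw n = φ^{n-1}(0)` for `n ≥ 1`. -/
def fibw (n : ℕ) : List Bool := phiW^[n - 1] [false]

/-- The bispecial factors of the Fibonacci word: `fibw n` with its
last two letters removed. -/
def pbis (n : ℕ) : List Bool := (fibw n).dropLast.dropLast

lemma fibw_succ (n : ℕ) (hn : 1 ≤ n) : fibw (n + 1) = phiW (fibw n) := by
  obtain ⟨m, rfl⟩ := Nat.exists_eq_add_of_le hn
  simp [fibw, Nat.add_sub_cancel_left, Function.iterate_succ_apply',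
    Nat.add_comm 1 m]

lemma phiW_append (u v : List Bool) : phiW (u ++ v) = phiW u ++ phiW v := by
  simp [phiW]

lemma dropLast2 (l : List Bool) (a b : Bool) :
    (l ++ [a, b]).dropLast.dropLast = l := by
  have : l ++ [a, b] = (l ++ [a]) ++ [b] := by simp
  rw [this, List.dropLast_concat, List.dropLast_concat]

lemma fibw_ends (n : ℕ) (hn : 2 ≤ n) :
    ∃ p, fibw n = p ++ [false, true] ∨ fibw n = p ++ [true, false] := by
  induction n with
  | zero => omega
  | succ m ih =>
    rcases Nat.lt_or_ge m 2 with hm | hm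
    · interval_cases m
      · omega
      · exact ⟨[], Or.inl rfl⟩
    · obtain ⟨p, hp | hp⟩ := ih hm
      · refine ⟨phiW p ++ [false], Or.inr ?_⟩
        rw [fibw_succ m (by omega), hp, phiW_append]
        simp [phiW, phi]
      · refine ⟨phiW p ++ [false], Or.inl ?_⟩
        rw [fibw_succ m (by omega), hp, phiW_append]
        simp [phiW, phi]

theorem fib_bispecial_rec (n : ℕ) (hn : 2 ≤ n) :
    phiW (pbis n) ++ [false] = pbis (n + 1) := by
  obtain ⟨p, hp | hp⟩ := fibw_ends n hn
  all_goals
    have hpb : pbis n = p := by rw [pbis, hp, dropLast2]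
    rw [hpb, show pbis (n+1) = (fibw (n+1)).dropLast.dropLast from rfl,
      fibw_succ n (by omega), hp, phiW_append]
  · show phiW p ++ [false] = (phiW p ++ phiW [false, true]).dropLast.dropLast
    have : phiW p ++ phiW [false, true] = (phiW p ++ [false]) ++ [true, false] := by
      simp [phiW, phi]
    rw [this, dropLast2]
  · show phiW p ++ [false] = (phiW p ++ phiW [true, false]).dropLast.dropLast
    have : phiW p ++ phiW [true, false] = (phiW p ++ [false]) ++ [false, true] := by
      simp [phiW, phi]
    rw [this, dropLast2]
end

section
/- The Fibonacci word f = φ^ω(0) equals the infinite product 0·1·0·φ²(10)·φ⁴(10)·φ⁶(10)··· ; equivalently, for all N ≥ 0, the word 010·φ²(10)·φ⁴(10)···φ^{2N}(10) is a prefix of the Fibonacci word. -/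
/-- The finite word `u` is a prefix of the infinite word `x`. -/
def IsPrefixI (u : List Bool) (x : ℕ → Bool) : Prop :=
  ∀ i, i < u.length → u.getD i false = x i

/-- `f` is the Fibonacci word: the fixed point of φ starting with 0,
i.e. every `φ^n(0)` is a prefix of `f`. -/
def IsFibWord (f : ℕ → Bool) : Prop :=
  ∀ n, IsPrefixI (phiW^[n] [false]) f

lemma phiW_iter_append (n : ℕ) (u v : List Bool) :
    phiW^[n] (u ++ v) = phiW^[n] u ++ phiW^[n] v := by
  induction n generalizing u v with
  | zero => simp
  | succ n ih =>
    simp only [Function.iterate_succ_apply, phiW_append, ih]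

lemma A_succ (n : ℕ) :
    phiW^[n + 1] [false] = phiW^[n] [false] ++ phiW^[n] [true] := by
  rw [Function.iterate_succ_apply]
  have h : phiW [false] = [false] ++ [true] := rfl
  rw [h, phiW_iter_append]

lemma B_succ (n : ℕ) : phiW^[n + 1] [true] = phiW^[n] [false] := by
  rw [Function.iterate_succ_apply]
  rfl

lemma A_plus2 (n : ℕ) :
    phiW^[n + 2] [false] = phiW^[n] [false] ++ (phiW^[n] [true] ++ phiW^[n] [false]) := by
  rw [show n + 2 = (n + 1) + 1 from rfl, A_succ, A_succ, B_succ, List.append_assoc]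

lemma key (N : ℕ) :
    [false, true, false] ++
        ((List.range N).map (fun k => phiW^[2 * (k + 1)] [true, false])).flatten
      = phiW^[2 * N + 2] [false] := by
  induction N with
  | zero => rfl
  | succ N ih =>
    rw [List.range_succ, List.map_append, List.flatten_append]
    simp only [List.map_cons, List.map_nil, List.flatten_cons, List.flatten_nil,
      List.append_nil, ← List.append_assoc, ih]
    have h10 : ([true, false] : List Bool) = [true] ++ [false] := rfl
    rw [h10, phiW_iter_append, show 2 * (N + 1) = 2 * N + 2 from by ring]
    conv_rhs => rw [A_plus2]

theorem fib_word_product_expansion (f : ℕ → Bool) (hf : IsFibWord f) (N : ℕ) :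
    IsPrefixI
      ([false, true, false] ++
        ((List.range N).map (fun k => phiW^[2 * (k + 1)] [true, false])).flatten) f := by
  rw [key]
  exact hf (2 * N + 2)
end
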